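/- There exist 2×2 positive semidefinite complex matrices A, B, C such that A² ⊴ B² and B² ⊴ C² hold, but A² ⊴ C² fails; explicitly one may take A = [[√2, 1/2],[1/2, √2]], B = (1/3)[[4, √2],[√2, 5]], and C = |Y| with Y = (1/3)[[4, 2√2],[0, 5]]. -/

import Mathlib

open Matrix
open scoped ComplexOrder

/-- The relation `X² ⊴ Y²` for positive matrices: `⟨X ξ, ξ⟩ ≤ ⟨Y² ξ, ξ⟩^{1/2}` for
all unit vectors `ξ ∈ ℂ²` (here `X` plays the role of the square root of `X²`). -/
def relSq (X Y : Matrix (Fin 2) (Fin 2) ℂ) : Prop :=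
  ∀ ξ : EuclideanSpace ℂ (Fin 2), ‖ξ‖ = 1 →
    (star (ξ : Fin 2 → ℂ) ⬝ᵥ X.mulVec ξ).re ≤
      Real.sqrt ((star (ξ : Fin 2 → ℂ) ⬝ᵥ (Y * Y).mulVec ξ).re)

noncomputable def matA : Matrix (Fin 2) (Fin 2) ℂ :=
  !![(Real.sqrt 2 : ℂ), 1/2; 1/2, (Real.sqrt 2 : ℂ)]

noncomputable def matB : Matrix (Fin 2) (Fin 2) ℂ :=
  (3 : ℂ)⁻¹ • !![4, (Real.sqrt 2 : ℂ); (Real.sqrt 2 : ℂ), 5]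

noncomputable def matY : Matrix (Fin 2) (Fin 2) ℂ :=
  (3 : ℂ)⁻¹ • !![4, (2 * Real.sqrt 2 : ℂ); 0, 5]

noncomputable def matC : Matrix (Fin 2) (Fin 2) ℂ :=
  (Matrix.posSemidef_conjTranspose_mul_self matY).1.eigenvectorUnitary.1 *
    diagonal ((RCLike.ofReal : ℝ → ℂ) ∘ Real.sqrt ∘
      (Matrix.posSemidef_conjTranspose_mul_self matY).1.eigenvalues) *
    (star (Matrix.posSemidef_conjTranspose_mul_self matY).1.eigenvectorUnitary : Matrix (Fin 2) (Fin 2) ℂ)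

/- ### Auxiliary lemmas -/

lemma r2c : (Real.sqrt 2 : ℂ) * (Real.sqrt 2 : ℂ) = 2 := by
  rw [← Complex.ofReal_mul, Real.mul_self_sqrt (by norm_num)]; norm_num

lemma r2sq : ((Real.sqrt 2 : ℝ) : ℂ)^2 = 2 := by rw [sq]; exact r2c

lemma r2r : Real.sqrt 2 * Real.sqrt 2 = 2 := Real.mul_self_sqrt (by norm_num)

lemma hA' : matA = !![((Real.sqrt 2 : ℝ):ℂ), ((1/2 : ℝ):ℂ); ((1/2:ℝ):ℂ), ((Real.sqrt 2:ℝ):ℂ)] := by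
  norm_num [matA]

lemma hB' : matB = !![((4/3 : ℝ):ℂ), ((Real.sqrt 2/3 : ℝ):ℂ); ((Real.sqrt 2/3:ℝ):ℂ), ((5/3:ℝ):ℂ)] := by
  ext i j
  fin_cases i <;> fin_cases j <;>
    · simp [matB]
      ring

lemma hB2 : matB * matB = !![((2 : ℝ):ℂ), ((Real.sqrt 2 : ℝ):ℂ); ((Real.sqrt 2:ℝ):ℂ), ((3:ℝ):ℂ)] := by
  rw [hB']
  ext i j
  fin_cases i <;> fin_cases j <;>
    · simp [Matrix.mul_apply, Fin.sum_univ_two]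
      try ring_nf
      try simp [r2sq, r2c]
      try norm_num

lemma hC2 : matC * matC = !![((16/9 : ℝ):ℂ), ((8*Real.sqrt 2/9 : ℝ):ℂ); ((8*Real.sqrt 2/9:ℝ):ℂ), ((33/9:ℝ):ℂ)] := by
  have key : matC * matC = matYᴴ * matY := by
    have h := Matrix.posSemidef_conjTranspose_mul_self matY
    have hU : (star h.1.eigenvectorUnitary.1) * h.1.eigenvectorUnitary.1 = 1 :=
      Unitary.coe_star_mul_self _
    have hd : diagonal ((RCLike.ofReal : ℝ → ℂ) ∘ Real.sqrt ∘ h.1.eigenvalues) *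
        diagonal ((RCLike.ofReal : ℝ → ℂ) ∘ Real.sqrt ∘ h.1.eigenvalues) =
        diagonal ((RCLike.ofReal : ℝ → ℂ) ∘ h.1.eigenvalues) := by
      rw [diagonal_mul_diagonal]
      congr 1
      funext i
      simp only [Function.comp_apply]
      rw [← RCLike.ofReal_mul, Real.mul_self_sqrt (h.eigenvalues_nonneg i)]
    conv_rhs => rw [h.1.spectral_theorem, Unitary.conjStarAlgAut_apply]
    unfold matC
    calc _ = h.1.eigenvectorUnitary.1 * (diagonal ((RCLike.ofReal : ℝ → ℂ) ∘ Real.sqrt ∘ h.1.eigenvalues) *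
          ((star h.1.eigenvectorUnitary.1) * h.1.eigenvectorUnitary.1) *
          diagonal ((RCLike.ofReal : ℝ → ℂ) ∘ Real.sqrt ∘ h.1.eigenvalues)) *
          star h.1.eigenvectorUnitary.1 := by simp only [mul_assoc]
      _ = _ := by rw [hU, mul_one, hd]
  rw [key]
  ext i j
  fin_cases i <;> fin_cases j <;>
    · simp [matY, Matrix.mul_apply, Fin.sum_univ_two, Matrix.conjTranspose_apply,
        Complex.conj_ofReal, map_ofNat]
      try ring_nf
      try simp [r2sq, r2c]
      try norm_num

lemma dot_re (p q w : ℝ) (v : Fin 2 → ℂ) :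
    (star v ⬝ᵥ (!![(p:ℂ), (q:ℂ); (q:ℂ), (w:ℂ)]).mulVec v).re
      = p * Complex.normSq (v 0) + w * Complex.normSq (v 1)
        + 2 * q * ((starRingEnd ℂ (v 0)) * v 1).re := by
  simp [Matrix.mulVec, dotProduct, Fin.sum_univ_two, Complex.normSq_apply,
    Complex.add_re, Complex.mul_re, Complex.ofReal_re, Complex.ofReal_im]
  ring

lemma dot_im (p q w : ℝ) (v : Fin 2 → ℂ) :
    (star v ⬝ᵥ (!![(p:ℂ), (q:ℂ); (q:ℂ), (w:ℂ)]).mulVec v).im = 0 := by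
  simp [Matrix.mulVec, dotProduct, Fin.sum_univ_two,
    Complex.add_im, Complex.mul_im, Complex.ofReal_re, Complex.ofReal_im]
  ring

lemma herm (p q w : ℝ) : (!![(p:ℂ), (q:ℂ); (q:ℂ), (w:ℂ)]).IsHermitian := by
  unfold Matrix.IsHermitian
  ext i j
  fin_cases i <;> fin_cases j <;> simp [Matrix.conjTranspose_apply, Complex.conj_ofReal]

/-- `s² ≤ a·b` where `s = Re(conj x · y)`. -/
lemma s_sq_le (x y : ℂ) :
    ((starRingEnd ℂ x) * y).re ^ 2 ≤ Complex.normSq x * Complex.normSq y := by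
  have h1 : Complex.normSq ((starRingEnd ℂ x) * y) = Complex.normSq x * Complex.normSq y := by
    simp [Complex.normSq_mul]
  rw [Complex.normSq_apply] at h1
  nlinarith [sq_nonneg ((starRingEnd ℂ x) * y).im]

lemma norm_one_iff (ξ : EuclideanSpace ℂ (Fin 2)) (hξ : ‖ξ‖ = 1) :
    Complex.normSq (ξ 0) + Complex.normSq (ξ 1) = 1 := by
  have h := congrArg (· ^ 2) hξ
  simp only [EuclideanSpace.norm_eq, Fin.sum_univ_two] at h
  rw [Real.sq_sqrt (by positivity)] at h
  simpa [Complex.sq_norm] using h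

lemma abs_le_of_sq {s c : ℝ} (hc : 0 ≤ c) (h : s^2 ≤ c^2) : |s| ≤ c := by
  have h2 := Real.sqrt_le_sqrt h
  rwa [Real.sqrt_sq_eq_abs, Real.sqrt_sq hc] at h2

lemma abs_s_le {a b s : ℝ} (ha : 0 ≤ a) (hb : 0 ≤ b) (hs : s^2 ≤ a*b) : |s| ≤ (a+b)/2 := by
  refine abs_le_of_sq (by positivity) ?_
  nlinarith [sq_nonneg (a - b)]

lemma sqrt2_le_2 : Real.sqrt 2 ≤ 2 := by nlinarith [r2r, Real.sqrt_nonneg 2]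

lemma psd_of (p q w : ℝ)
    (h : ∀ a b s : ℝ, 0 ≤ a → 0 ≤ b → s^2 ≤ a*b → 0 ≤ p*a + w*b + 2*q*s) :
    (!![(p:ℂ), (q:ℂ); (q:ℂ), (w:ℂ)]).PosSemidef := by
  refine .of_dotProduct_mulVec_nonneg (herm p q w) fun v => ?_
  rw [Complex.le_def]
  refine ⟨?_, by simpa using (dot_im p q w v).symm⟩
  simp only [Complex.zero_re]
  rw [dot_re]
  have := h (Complex.normSq (v 0)) (Complex.normSq (v 1)) (((starRingEnd ℂ) (v 0)) * v 1).re
    (Complex.normSq_nonneg _) (Complex.normSq_nonneg _) (s_sq_le _ _)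
  linarith

theorem stmt11 :
    matA.PosSemidef ∧ matB.PosSemidef ∧ matC.PosSemidef ∧
      relSq matA matB ∧ relSq matB matC ∧ ¬ relSq matA matC := by
  have hr : Real.sqrt 2 ≥ 1 := by nlinarith [r2r, Real.sqrt_nonneg 2]
  refine ⟨?_, ?_, ?_, ?_, ?_, ?_⟩
  · rw [hA']
    apply psd_of
    intro a b s ha hb hs
    have h1 := abs_s_le ha hb hs
    have h2 := neg_abs_le s
    nlinarith [mul_nonneg (show (0:ℝ) ≤ Real.sqrt 2 - 1 by linarith [hr]) ha,
      mul_nonneg (show (0:ℝ) ≤ Real.sqrt 2 - 1 by linarith [hr]) hb]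
  · rw [hB']
    apply psd_of
    intro a b s ha hb hs
    have h1 := abs_s_le ha hb hs
    have h2 := neg_abs_le s
    nlinarith [mul_nonneg (show (0:ℝ) ≤ 2 - Real.sqrt 2 by linarith [sqrt2_le_2]) (abs_nonneg s),
      Real.sqrt_nonneg 2]
  · exact (Matrix.PosSemidef.diagonal (fun i => by
      simp only [Function.comp_apply, Pi.zero_apply]
      exact Complex.zero_le_real.mpr (Real.sqrt_nonneg _))).mul_mul_conjTranspose_same _
  · -- relSq matA matB
    intro ξ hξ
    rw [hA', hB2, dot_re, dot_re]
    set a := Complex.normSq (ξ 0)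
    set b := Complex.normSq (ξ 1)
    set s := (((starRingEnd ℂ) (ξ 0)) * ξ 1).re
    have hab : a + b = 1 := norm_one_iff ξ hξ
    have hs : s^2 ≤ a*b := s_sq_le _ _
    have ha : 0 ≤ a := Complex.normSq_nonneg _
    have hb : 0 ≤ b := Complex.normSq_nonneg _
    have h1 := abs_s_le ha hb hs
    have h2 := neg_abs_le s
    have h3 := le_abs_self s
    have hL : 0 ≤ Real.sqrt 2 * a + Real.sqrt 2 * b + 2 * (1/2) * s := by
      nlinarith [mul_nonneg (show (0:ℝ) ≤ Real.sqrt 2 - 1 by linarith [hr]) ha,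
        mul_nonneg (show (0:ℝ) ≤ Real.sqrt 2 - 1 by linarith [hr]) hb]
    have hR : (0:ℝ) ≤ 2*a + 3*b + 2*Real.sqrt 2*s := by
      nlinarith [mul_nonneg (show (0:ℝ) ≤ 2 - Real.sqrt 2 by linarith [sqrt2_le_2]) (abs_nonneg s),
        Real.sqrt_nonneg 2]
    rw [Real.le_sqrt hL hR]
    have he : Real.sqrt 2 * a + Real.sqrt 2 * b + 2 * (1/2) * s = Real.sqrt 2 + s := by
      linear_combination Real.sqrt 2 * hab
    rw [he]
    nlinarith [r2r, hs, mul_nonneg hb (show (0:ℝ) ≤ 1 - a by linarith)]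
  · -- relSq matB matC
    intro ξ hξ
    rw [hB', hC2, dot_re, dot_re]
    set a := Complex.normSq (ξ 0)
    set b := Complex.normSq (ξ 1)
    set s := (((starRingEnd ℂ) (ξ 0)) * ξ 1).re
    have hab : a + b = 1 := norm_one_iff ξ hξ
    have hs : s^2 ≤ a*b := s_sq_le _ _
    have ha : 0 ≤ a := Complex.normSq_nonneg _
    have hb : 0 ≤ b := Complex.normSq_nonneg _
    have key : 4 * Real.sqrt 2 * s ≤ 1 + 7*b := by
      have h1 : (4 * Real.sqrt 2 * s)^2 ≤ (1 + 7*b)^2 := by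
        nlinarith [r2r, sq_nonneg (1 - 9*b)]
      calc 4 * Real.sqrt 2 * s ≤ |4 * Real.sqrt 2 * s| := le_abs_self _
        _ ≤ 1 + 7*b := abs_le_of_sq (by linarith) h1
    have habs := abs_s_le ha hb hs
    have hL : 0 ≤ 4/3*a + 5/3*b + 2*(Real.sqrt 2/3)*s := by
      nlinarith [neg_abs_le s,
        mul_nonneg (show (0:ℝ) ≤ 2 - Real.sqrt 2 by linarith [sqrt2_le_2]) (abs_nonneg s),
        Real.sqrt_nonneg 2]
    rw [Real.le_sqrt hL (by nlinarith [r2r, key, mul_nonneg hb (show (0:ℝ) ≤ 1 + 7*b - 4*Real.sqrt 2*s by linarith)])]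
    nlinarith [r2r, mul_nonneg hb (show (0:ℝ) ≤ 1 + 7*b - 4*Real.sqrt 2*s by linarith)]
  · -- ¬ relSq matA matC
    intro h
    set ξ : EuclideanSpace ℂ (Fin 2) :=
      (WithLp.equiv 2 (Fin 2 → ℂ)).symm ![((2*Real.sqrt 2/3 : ℝ) : ℂ), ((1/3 : ℝ) : ℂ)] with hξdef
    have hξ0 : (ξ : Fin 2 → ℂ) 0 = ((2*Real.sqrt 2/3 : ℝ) : ℂ) := rfl
    have hξ1 : (ξ : Fin 2 → ℂ) 1 = ((1/3 : ℝ) : ℂ) := rfl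
    have hn : ‖ξ‖ = 1 := by
      rw [EuclideanSpace.norm_eq, Fin.sum_univ_two, hξ0, hξ1]
      rw [Complex.norm_real, Complex.norm_real]
      rw [Real.norm_eq_abs, Real.norm_eq_abs]
      rw [abs_of_nonneg (by positivity), abs_of_nonneg (by norm_num)]
      rw [show (2*Real.sqrt 2/3)^2 + (1/3 : ℝ)^2 = 1 by nlinarith [r2r]]
      exact Real.sqrt_one
    have := h ξ hn
    rw [hA', hC2, dot_re, dot_re, hξ0, hξ1] at this
    rw [Complex.normSq_ofReal, Complex.normSq_ofReal, Complex.conj_ofReal] at this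
    rw [← Complex.ofReal_mul, Complex.ofReal_re] at this
    have hre : Real.sqrt 2 * (2*Real.sqrt 2/3 * (2*Real.sqrt 2/3))
        + Real.sqrt 2 * (1/3 * (1/3)) + 2 * (1/2) * (2*Real.sqrt 2/3 * (1/3))
        = 11 * Real.sqrt 2 / 9 := by nlinarith [r2r]
    have hrhs : 16/9 * (2*Real.sqrt 2/3 * (2*Real.sqrt 2/3)) + 33/9 * (1/3 * (1/3))
        + 2 * (8*Real.sqrt 2/9) * (2*Real.sqrt 2/3 * (1/3)) = 25/9 := by nlinarith [r2r]
    rw [hre, hrhs] at this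
    have h53 : Real.sqrt (25/9) = 5/3 := by
      rw [show (25/9 : ℝ) = (5/3)^2 by norm_num, Real.sqrt_sq (by norm_num)]
    rw [h53] at this
    nlinarith [r2r, Real.sqrt_nonneg 2]
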